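/- Let φ, ψ : [0,1] → ℝ be square-integrable functions and define K(φ) = ∫₀¹ e^{2∫₀ˣ φ(y) dy} dx (and K(ψ) analogously). Then |K(φ) − K(ψ)| ≤ e^{2‖φ‖_{L²([0,1])}} ( e^{2‖ψ − φ‖_{L²([0,1])}} − 1 ). -/

import Mathlib

open MeasureTheory

private lemma abs_one_sub_exp (t : ℝ) : |1 - Real.exp t| ≤ Real.exp |t| - 1 := by
  rcases le_or_gt 0 t with h | h
  · rw [abs_of_nonneg h, abs_of_nonpos (by nlinarith [Real.one_le_exp h])]
    linarith
  · rw [abs_of_neg h, abs_of_nonneg (by nlinarith [Real.exp_lt_one_iff.mpr h])]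
    nlinarith [Real.add_one_le_exp t, Real.add_one_le_exp (-t)]

private lemma sq_int_bound {f : ℝ → ℝ}
    (hf : IntegrableOn (fun x => |f x|) (Set.Ioc (0:ℝ) 1))
    (hf2 : IntegrableOn (fun x => f x ^ 2) (Set.Ioc (0:ℝ) 1)) :
    ∫ y in Set.Ioc (0:ℝ) 1, |f y| ≤ (∫ y in Set.Ioc (0:ℝ) 1, f y ^ 2) ^ ((1:ℝ)/2) := by
  set S := ∫ y in Set.Ioc (0:ℝ) 1, f y ^ 2 with hSdef
  have hS : 0 ≤ S := setIntegral_nonneg measurableSet_Ioc (fun y _ => sq_nonneg _)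
  have key : ∀ t : ℝ, 0 < t →
      (∫ y in Set.Ioc (0:ℝ) 1, |f y|) ≤ (t * S + 1 / t) / 2 := by
    intro t ht
    have hint : IntegrableOn (fun y => (t * f y ^ 2 + 1 / t) / 2) (Set.Ioc (0:ℝ) 1) := by
      exact (((hf2.const_mul t).add (integrableOn_const
        (by simp [Real.volume_Ioc]))).div_const 2)
    have hmono : (∫ y in Set.Ioc (0:ℝ) 1, |f y|)
        ≤ ∫ y in Set.Ioc (0:ℝ) 1, (t * f y ^ 2 + 1 / t) / 2 := by
      refine setIntegral_mono_on hf hint measurableSet_Ioc (fun y _ => ?_)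
      have h3 : 2 * t * |f y| ≤ t ^ 2 * f y ^ 2 + 1 := by
        nlinarith [sq_nonneg (t * |f y| - 1), sq_abs (f y)]
      rw [le_div_iff₀ (by norm_num : (0:ℝ) < 2), ← sub_nonneg]
      have heq : t * f y ^ 2 + 1 / t - |f y| * 2
          = (t ^ 2 * f y ^ 2 + 1 - 2 * t * |f y|) / t := by
        field_simp
      rw [heq]
      exact div_nonneg (by linarith) ht.le
    refine hmono.trans_eq ?_
    rw [integral_div, integral_add (hf2.const_mul t) (integrableOn_const
      (by simp [Real.volume_Ioc]))]
    simp [integral_const_mul, setIntegral_const, Real.volume_Ioc, ← hSdef]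
  rcases eq_or_lt_of_le hS with h0 | h0
  · rw [← h0, Real.zero_rpow (by norm_num)]
    by_contra hc
    push_neg at hc
    have := key (1 / ∫ y in Set.Ioc (0:ℝ) 1, |f y|) (by positivity)
    rw [← h0] at this
    have h1 : (0:ℝ) < ∫ y in Set.Ioc (0:ℝ) 1, |f y| := hc
    simp only [mul_zero, zero_add, one_div, inv_inv] at this
    linarith
  · have hsqpos : 0 < Real.sqrt S := Real.sqrt_pos.mpr h0
    calc (∫ y in Set.Ioc (0:ℝ) 1, |f y|)
        ≤ (1 / Real.sqrt S * S + 1 / (1 / Real.sqrt S)) / 2 := key _ (by positivity)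
      _ = Real.sqrt S := by
          have hmul : 1 / Real.sqrt S * S = Real.sqrt S := by
            rw [div_mul_eq_mul_div, one_mul, div_eq_iff (ne_of_gt hsqpos)]
            nlinarith [Real.sq_sqrt hS]
          rw [hmul, one_div_one_div]
          ring
      _ = S ^ ((1:ℝ)/2) := Real.sqrt_eq_rpow S

private lemma cs_bound {f : ℝ → ℝ}
    (hf : MemLp f 2 (volume.restrict (Set.Icc (0:ℝ) 1)))
    {x : ℝ} (hx0 : 0 ≤ x) (hx1 : x ≤ 1) :
    |∫ y in (0:ℝ)..x, f y| ≤ (∫ y in (0:ℝ)..1, f y ^ 2) ^ ((1:ℝ)/2) := by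
  have hfin : IsFiniteMeasure (volume.restrict (Set.Icc (0:ℝ) 1)) :=
    ⟨by simp [Real.volume_Icc]⟩
  have hf1 : IntegrableOn f (Set.Icc (0:ℝ) 1) := hf.integrable (by norm_num)
  have hfabs' : IntegrableOn (fun y => |f y|) (Set.Icc (0:ℝ) 1) := hf1.abs
  have hfabs : IntegrableOn (fun y => |f y|) (Set.Ioc (0:ℝ) 1) :=
    hfabs'.mono_set Set.Ioc_subset_Icc_self
  have hf2' : IntegrableOn (fun y => f y ^ 2) (Set.Icc (0:ℝ) 1) := hf.integrable_sq
  have hf2 : IntegrableOn (fun y => f y ^ 2) (Set.Ioc (0:ℝ) 1) :=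
    hf2'.mono_set Set.Ioc_subset_Icc_self
  have h1 : |∫ y in (0:ℝ)..x, f y| ≤ ∫ y in Set.Ioc (0:ℝ) x, |f y| := by
    rw [intervalIntegral.integral_of_le hx0, ← Real.norm_eq_abs]
    simpa [Real.norm_eq_abs] using
      norm_integral_le_integral_norm (μ := volume.restrict (Set.Ioc (0:ℝ) x)) f
  have h2 : (∫ y in Set.Ioc (0:ℝ) x, |f y|) ≤ ∫ y in Set.Ioc (0:ℝ) 1, |f y| := by
    refine setIntegral_mono_set hfabs ?_ ?_
    · exact Filter.Eventually.of_forall fun y => abs_nonneg _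
    · exact (Set.Ioc_subset_Ioc_right hx1).eventuallyLE
  have h3 := sq_int_bound hfabs hf2
  rw [intervalIntegral.integral_of_le (by norm_num : (0:ℝ) ≤ 1)]
  exact (h1.trans h2).trans h3

theorem K_lipschitz_bound
    (φ ψ : ℝ → ℝ)
    (hφ : MemLp φ 2 (volume.restrict (Set.Icc (0:ℝ) 1)))
    (hψ : MemLp ψ 2 (volume.restrict (Set.Icc (0:ℝ) 1))) :
    |(∫ x in (0:ℝ)..1, Real.exp (2 * ∫ y in (0:ℝ)..x, φ y))
        - ∫ x in (0:ℝ)..1, Real.exp (2 * ∫ y in (0:ℝ)..x, ψ y)|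
      ≤ Real.exp (2 * (∫ x in (0:ℝ)..1, (φ x) ^ 2) ^ ((1:ℝ)/2))
          * (Real.exp (2 * (∫ x in (0:ℝ)..1, (ψ x - φ x) ^ 2) ^ ((1:ℝ)/2)) - 1) := by
  have hfin : IsFiniteMeasure (volume.restrict (Set.Icc (0:ℝ) 1)) :=
    ⟨by simp [Real.volume_Icc]⟩
  have hφ1 : IntegrableOn φ (Set.Icc (0:ℝ) 1) := hφ.integrable (by norm_num)
  have hψ1 : IntegrableOn ψ (Set.Icc (0:ℝ) 1) := hψ.integrable (by norm_num)
  have huIcc : Set.uIcc (0:ℝ) 1 = Set.Icc (0:ℝ) 1 := Set.uIcc_of_le (by norm_num)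
  -- interval integrability of φ, ψ on [0, x] for x ∈ [0,1]
  have hφx : ∀ x : ℝ, 0 ≤ x → x ≤ 1 → IntervalIntegrable φ volume 0 x := by
    intro x hx0 hx1
    exact (hφ1.mono_set (by rw [Set.uIcc_of_le hx0]; exact Set.Icc_subset_Icc_right hx1)
      ).intervalIntegrable
  have hψx : ∀ x : ℝ, 0 ≤ x → x ≤ 1 → IntervalIntegrable ψ volume 0 x := by
    intro x hx0 hx1
    exact (hψ1.mono_set (by rw [Set.uIcc_of_le hx0]; exact Set.Icc_subset_Icc_right hx1)
      ).intervalIntegrable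
  -- continuity and integrability of the exponential integrands
  have hcφ : ContinuousOn (fun x => Real.exp (2 * ∫ y in (0:ℝ)..x, φ y))
      (Set.Icc (0:ℝ) 1) := by
    apply Real.continuous_exp.comp_continuousOn
    apply ContinuousOn.mul continuousOn_const
    rw [← huIcc]
    exact intervalIntegral.continuousOn_primitive_interval (by rw [huIcc]; exact hφ1)
  have hcψ : ContinuousOn (fun x => Real.exp (2 * ∫ y in (0:ℝ)..x, ψ y))
      (Set.Icc (0:ℝ) 1) := by
    apply Real.continuous_exp.comp_continuousOn
    apply ContinuousOn.mul continuousOn_const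
    rw [← huIcc]
    exact intervalIntegral.continuousOn_primitive_interval (by rw [huIcc]; exact hψ1)
  have hu : IntervalIntegrable (fun x => Real.exp (2 * ∫ y in (0:ℝ)..x, φ y))
      volume 0 1 := (hcφ.mono huIcc.subset).intervalIntegrable
  have hv : IntervalIntegrable (fun x => Real.exp (2 * ∫ y in (0:ℝ)..x, ψ y))
      volume 0 1 := (hcψ.mono huIcc.subset).intervalIntegrable
  set A := (∫ x in (0:ℝ)..1, (φ x) ^ 2) ^ ((1:ℝ)/2) with hA
  set B := (∫ x in (0:ℝ)..1, (ψ x - φ x) ^ 2) ^ ((1:ℝ)/2) with hB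
  have hB0 : 0 ≤ B :=
    Real.rpow_nonneg
      (intervalIntegral.integral_nonneg (by norm_num) fun x _ => sq_nonneg _) _
  -- pointwise bound
  have key : ∀ x ∈ Set.uIoc (0:ℝ) 1,
      ‖Real.exp (2 * ∫ y in (0:ℝ)..x, φ y) - Real.exp (2 * ∫ y in (0:ℝ)..x, ψ y)‖
        ≤ Real.exp (2 * A) * (Real.exp (2 * B) - 1) := by
    intro x hx
    rw [Set.uIoc_of_le (by norm_num : (0:ℝ) ≤ 1)] at hx
    have hx0 : 0 ≤ x := le_of_lt hx.1
    have hx1 : x ≤ 1 := hx.2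
    set F := ∫ y in (0:ℝ)..x, φ y with hF
    set G := ∫ y in (0:ℝ)..x, ψ y with hG
    have hD : (∫ y in (0:ℝ)..x, (ψ y - φ y)) = G - F :=
      intervalIntegral.integral_sub (hψx x hx0 hx1) (hφx x hx0 hx1)
    have hFA : |F| ≤ A := cs_bound hφ hx0 hx1
    have hDB : |G - F| ≤ B := by
      rw [← hD]
      exact cs_bound (hψ.sub hφ) hx0 hx1
    have hGF : Real.exp (2 * G) = Real.exp (2 * F) * Real.exp (2 * (G - F)) := by
      rw [← Real.exp_add]; ring_nf
    rw [Real.norm_eq_abs, hGF, ← mul_one_sub, abs_mul, Real.abs_exp]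
    have h1 : Real.exp (2 * F) ≤ Real.exp (2 * A) :=
      Real.exp_le_exp.mpr (by nlinarith [le_abs_self F, hFA])
    have h2 : |1 - Real.exp (2 * (G - F))| ≤ Real.exp (2 * B) - 1 := by
      refine (abs_one_sub_exp _).trans ?_
      have : |2 * (G - F)| ≤ 2 * B := by
        rw [abs_mul, abs_two]
        nlinarith
      linarith [Real.exp_le_exp.mpr this]
    have h3 : (0:ℝ) ≤ |1 - Real.exp (2 * (G - F))| := abs_nonneg _
    exact mul_le_mul h1 h2 h3 (Real.exp_nonneg _)
  have := intervalIntegral.norm_integral_le_of_norm_le_const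
    (C := Real.exp (2 * A) * (Real.exp (2 * B) - 1)) key
  rw [← intervalIntegral.integral_sub hu hv] at *
  simpa [Real.norm_eq_abs] using this
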